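/- Let f: T → T' be an injective morphism of necklaces with |V_{T'} - J_{T'}| - |V_T - J_T| = 1 (a type (i) morphism). Then the induced functor P₁(f): {0,1}^N → {0,1}^{N+1}, where N = |V_T - J_T|, is a cubical coface functor: there exist j ∈ {1,...,N+1} and ε ∈ {0,1} such that P₁(f)(s_1,...,s_N) = (s_1,...,s_{j-1}, ε, s_j,...,s_N). Moreover ε = 1 if J_{T'} is a proper subset of f(J_T) and ε = 0 if J_{T'} = f(J_T). -/

import Mathlib

/-! Combinatorial model of necklaces (wedges of simplices glued end to end),
encoded by the totally ordered vertex set `Fin (m+1)` together with the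
subset `J` of joints (containing the first and last vertex); beads are the
intervals between consecutive joints. -/

structure Necklace where
  m : ℕ
  J : Finset (Fin (m + 1))
  zero_mem : 0 ∈ J
  last_mem : Fin.last m ∈ J

namespace Necklace

/-- Two vertices lie in a common bead. -/
def SameBead (T : Necklace) (v w : Fin (T.m + 1)) : Prop :=
  ∃ a b : Fin (T.m + 1), a ∈ T.J ∧ b ∈ T.J ∧ (∀ c ∈ T.J, c ≤ a ∨ b ≤ c) ∧
    a ≤ v ∧ v ≤ b ∧ a ≤ w ∧ w ≤ b

/-- A morphism of necklaces: a vertex-level monotone map preserving the first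
and last vertices and mapping each bead into a single bead.  (Such data is
equivalent to a simplicial map of necklaces preserving endpoints.) -/
structure Hom (T T' : Necklace) where
  f : Fin (T.m + 1) → Fin (T'.m + 1)
  mono : Monotone f
  map_zero : f 0 = 0
  map_last : f (Fin.last T.m) = Fin.last T'.m
  bead : ∀ v w, SameBead T v w → SameBead T' (f v) (f w)

/-- Identity morphism. -/
def Hom.id (T : Necklace) : Hom T T :=
  ⟨_root_.id, monotone_id, rfl, rfl, fun _ _ h => h⟩

/-- Composition of morphisms of necklaces. -/
def Hom.comp {T T' T'' : Necklace} (g : Hom T' T'') (h : Hom T T') : Hom T T'' :=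
  ⟨g.f ∘ h.f, g.mono.comp h.mono,
    by simp [Function.comp, h.map_zero, g.map_zero],
    by simp [Function.comp, h.map_last, g.map_last],
    fun v w hb => g.bead _ _ (h.bead v w hb)⟩

/-- The set of non-joint vertices. -/
def nonJoints (T : Necklace) : Finset (Fin (T.m + 1)) := Finset.univ \ T.J

/-- The number of non-joint vertices, `N = |V_T - J_T|`. -/
def N (T : Necklace) : ℕ := T.nonJoints.card

/-- Enumeration of the non-joint vertices in increasing order. -/
noncomputable def enum (T : Necklace) : Fin T.N ≃o {x // x ∈ T.nonJoints} :=
  T.nonJoints.orderIsoOfFin rfl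

/-- The subset of vertices encoded by a cube-vertex `s : Fin (N T) → Bool`
(the joints together with the non-joints whose coordinate is `true`). -/
noncomputable def subsetOf (T : Necklace) (s : Fin T.N → Bool) : Finset (Fin (T.m + 1)) :=
  T.J ∪ (Finset.univ.filter (fun i => s i = true)).image (fun i => (T.enum i : Fin (T.m + 1)))

/-- The functor `P₁(g) : {0,1}^{N T} → {0,1}^{N T'}` induced by a morphism of
necklaces, expressed on vertices of the cubes via indicator sequences. -/
noncomputable def P1 {T T' : Necklace} (g : Hom T T') (s : Fin T.N → Bool) :
    Fin T'.N → Bool :=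
  fun i' => decide ((T'.enum i' : Fin (T'.m + 1)) ∈ (T.subsetOf s).image g.f)

/-- Type (i) morphisms: injective with `|V' - J'| = |V - J| + 1`. -/
def TypeI {T T' : Necklace} (g : Hom T T') : Prop :=
  Function.Injective g.f ∧ T'.N = T.N + 1

/-- Type (ii) morphisms: a wedge of identities and exactly one simplicial
codegeneracy; vertex-theoretically, a surjection collapsing exactly one pair of
consecutive vertices, not both of which are joints, mapping joints bijectively
onto joints. -/
def TypeII {T T' : Necklace} (g : Hom T T') : Prop :=
  Function.Surjective g.f ∧ Finset.image g.f T.J = T'.J ∧ Set.InjOn g.f (T.J : Set _) ∧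
  ∃ v : Fin T.m, g.f v.castSucc = g.f v.succ ∧ ¬(v.castSucc ∈ T.J ∧ v.succ ∈ T.J) ∧
    ∀ a b, g.f a = g.f b → a = b ∨ ({a, b} : Finset _) = {v.castSucc, v.succ}

/-- Type (iii) morphisms: collapse of a `Δ¹` bead (both of whose endpoints are
joints) to a point, injective elsewhere. -/
def TypeIII {T T' : Necklace} (g : Hom T T') : Prop :=
  Function.Surjective g.f ∧ Finset.image g.f T.J = T'.J ∧
  ∃ v : Fin T.m, g.f v.castSucc = g.f v.succ ∧ v.castSucc ∈ T.J ∧ v.succ ∈ T.J ∧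
    ∀ a b, g.f a = g.f b → a = b ∨ ({a, b} : Finset _) = {v.castSucc, v.succ}

/-- `g` is an identity morphism of necklaces. -/
def IsIdentity {T T' : Necklace} (g : Hom T T') : Prop :=
  T = T' ∧ ∀ v, ((g.f v : ℕ) = (v : ℕ))

/-- Compositions of morphisms of types (i), (ii), (iii). -/
inductive IsGenComp : ∀ {T T' : Necklace}, Hom T T' → Prop
  | of {T T'} (g : Hom T T') : TypeI g ∨ TypeII g ∨ TypeIII g → IsGenComp g
  | comp {T T' T''} (g : Hom T T') (g' : Hom T' T'') :
      IsGenComp g → IsGenComp g' → IsGenComp (g'.comp g)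

/-- Compositions of `n` morphisms of type (i). -/
inductive IsCompI : ∀ {T T' : Necklace}, Hom T T' → ℕ → Prop
  | of {T T'} (g : Hom T T') : TypeI g → IsCompI g 1
  | comp {T T' T''} (g : Hom T T') (g' : Hom T' T'') {n n' : ℕ} :
      IsCompI g n → IsCompI g' n' → IsCompI (g'.comp g) (n + n')

/-- The standard simplex `Δᵖ` regarded as a necklace with one bead. -/
def simplex (p : ℕ) : Necklace :=
  ⟨p, {0, Fin.last p}, by simp, by simp⟩

end Necklace

open Finset in
private lemma Necklace.no_joint_between {T T' : Necklace} (g : Necklace.Hom T T')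
    {v w : Fin (T.m + 1)} (hvw : v ≤ w) (hno : ∀ c ∈ T.J, c ≤ v ∨ w ≤ c)
    {j' : Fin (T'.m + 1)} (hj' : j' ∈ T'.J) (h1 : g.f v < j') (h2 : j' < g.f w) : False := by
  have hane : (T.J.filter (· ≤ v)).Nonempty := ⟨0, by simp [T.zero_mem, Fin.zero_le]⟩
  have hbne : (T.J.filter (w ≤ ·)).Nonempty := ⟨Fin.last T.m, by simp [T.last_mem, Fin.le_last]⟩
  have hamem := Finset.mem_filter.mp ((T.J.filter (· ≤ v)).max'_mem hane)
  have hbmem := Finset.mem_filter.mp ((T.J.filter (w ≤ ·)).min'_mem hbne)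
  have hbead : Necklace.SameBead T v w := by
    refine ⟨(T.J.filter (· ≤ v)).max' hane, (T.J.filter (w ≤ ·)).min' hbne,
      hamem.1, hbmem.1, ?_, hamem.2, le_trans hvw hbmem.2, le_trans hamem.2 hvw, hbmem.2⟩
    intro c hc
    rcases hno c hc with h | h
    · exact Or.inl (Finset.le_max' (T.J.filter (· ≤ v)) c (Finset.mem_filter.mpr ⟨hc, h⟩))
    · exact Or.inr (Finset.min'_le (T.J.filter (w ≤ ·)) c (Finset.mem_filter.mpr ⟨hc, h⟩))
  obtain ⟨a', b', _, _, hcons, hav, _, _, hwb⟩ := g.bead v w hbead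
  rcases hcons j' hj' with h | h
  · exact absurd (lt_of_le_of_lt (le_trans h hav) h1) (lt_irrefl j')
  · exact absurd (lt_of_lt_of_le h2 (le_trans hwb h)) (lt_irrefl j')

open Finset in
private lemma Necklace.joint_lift {T T' : Necklace} (g : Necklace.Hom T T')
    (hinj : Function.Injective g.f) {j' : Fin (T'.m + 1)} (hj' : j' ∈ T'.J) :
    ∃ w ∈ T.J, g.f w = j' := by
  have hsm : StrictMono g.f := g.mono.strictMono_of_injective hinj
  have hr : ∃ v, g.f v = j' := by
    by_contra hcon
    push_neg at hcon
    have hSne : (Finset.univ.filter (fun v => g.f v ≤ j')).Nonempty :=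
      ⟨0, by simp [g.map_zero, Fin.zero_le]⟩
    obtain ⟨v, hvmax⟩ : ∃ v, v = (Finset.univ.filter (fun v => g.f v ≤ j')).max' hSne := ⟨_, rfl⟩
    have hv1 : g.f v ≤ j' := by
      rw [hvmax]
      exact (Finset.mem_filter.mp
        ((Finset.univ.filter (fun v => g.f v ≤ j')).max'_mem hSne)).2
    have hvlt : g.f v < j' := lt_of_le_of_ne hv1 (hcon v)
    have hvne : v ≠ Fin.last T.m := by
      intro h
      have hlast : g.f v = Fin.last T'.m := by rw [h, g.map_last]
      exact hcon v (le_antisymm hv1 (hlast ▸ Fin.le_last j'))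
    have hvltl : (v : ℕ) < T.m := Fin.lt_last_iff_ne_last.mpr hvne
    have hucast : (⟨(v : ℕ), hvltl⟩ : Fin T.m).castSucc = v := rfl
    have hsucc : j' < g.f (⟨(v : ℕ), hvltl⟩ : Fin T.m).succ := by
      by_contra hle
      push_neg at hle
      have hmem : (⟨(v : ℕ), hvltl⟩ : Fin T.m).succ
          ∈ Finset.univ.filter (fun v => g.f v ≤ j') := by simpa using hle
      have hlev : (⟨(v : ℕ), hvltl⟩ : Fin T.m).succ ≤ v := by
        conv_rhs => rw [hvmax]
        exact Finset.le_max' _ _ hmem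
      have hvs : v < (⟨(v : ℕ), hvltl⟩ : Fin T.m).succ := by
        have := (Fin.castSucc_lt_succ : (⟨(v : ℕ), hvltl⟩ : Fin T.m).castSucc < (⟨(v : ℕ), hvltl⟩ : Fin T.m).succ)
        rwa [hucast] at this
      exact absurd (lt_of_lt_of_le hvs hlev) (lt_irrefl v)
    refine Necklace.no_joint_between g (le_of_lt Fin.castSucc_lt_succ) ?_ hj' ?_ hsucc
    · intro c hc
      rcases le_or_gt c (⟨(v : ℕ), hvltl⟩ : Fin T.m).castSucc with h | h
      · exact Or.inl h
      · exact Or.inr (Fin.castSucc_lt_iff_succ_le.mp h)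
    · rw [hucast]; exact hvlt
  obtain ⟨v, rfl⟩ := hr
  refine ⟨v, ?_, rfl⟩
  by_contra hv
  have hane : (T.J.filter (· ≤ v)).Nonempty := ⟨0, by simp [T.zero_mem, Fin.zero_le]⟩
  have hbne : (T.J.filter (v ≤ ·)).Nonempty := ⟨Fin.last T.m, by simp [T.last_mem, Fin.le_last]⟩
  have hamem := Finset.mem_filter.mp ((T.J.filter (· ≤ v)).max'_mem hane)
  have hbmem := Finset.mem_filter.mp ((T.J.filter (v ≤ ·)).min'_mem hbne)
  have hav : (T.J.filter (· ≤ v)).max' hane < v :=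
    lt_of_le_of_ne hamem.2 (fun h => hv (h ▸ hamem.1))
  have hvb : v < (T.J.filter (v ≤ ·)).min' hbne :=
    lt_of_le_of_ne hbmem.2 (fun h => hv (by rw [h]; exact hbmem.1))
  refine Necklace.no_joint_between g (le_of_lt (lt_trans hav hvb)) ?_ hj' (hsm hav) (hsm hvb)
  intro c hc
  rcases le_or_gt c v with h | h
  · exact Or.inl (Finset.le_max' (T.J.filter (· ≤ v)) c (Finset.mem_filter.mpr ⟨hc, h⟩))
  · exact Or.inr (Finset.min'_le (T.J.filter (v ≤ ·)) c (Finset.mem_filter.mpr ⟨hc, le_of_lt h⟩))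

open Necklace in
/-- For a type (i) morphism of necklaces `g : T → T'` (injective
with `|V'-J'| = |V-J| + 1`), the induced map `P₁(g) : {0,1}^N → {0,1}^{N+1}` is a
cubical coface map, inserting the constant `ε` in some slot `j`; moreover `ε = 1`
when `J_{T'} ⊊ g(J_T)` and `ε = 0` when `J_{T'} = g(J_T)`. -/
theorem P1_of_typeI_is_coface {T T' : Necklace} (g : Necklace.Hom T T')
    (hg : Necklace.TypeI g) :
    ∃ (j : Fin (T.N + 1)) (ε : Bool),
      (∀ (s : Fin T.N → Bool) (i : Fin T'.N),
          Necklace.P1 g s i = (Fin.insertNth (α := fun _ => Bool) j ε s) (Fin.cast hg.2 i)) ∧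
      (T'.J ⊂ Finset.image g.f T.J → ε = true) ∧
      (T'.J = Finset.image g.f T.J → ε = false) := by
  have hinj := hg.1
  have hsm : StrictMono g.f := g.mono.strictMono_of_injective hinj
  have hnj : ∀ v ∈ T.nonJoints, g.f v ∈ T'.nonJoints := by
    intro v hv
    simp only [Necklace.nonJoints, Finset.mem_sdiff, Finset.mem_univ, true_and] at hv ⊢
    intro hgv
    obtain ⟨w, hw, hgw⟩ := Necklace.joint_lift g hinj hgv
    exact hv (hinj hgw ▸ hw)
  have hAsub : T.nonJoints.image g.f ⊆ T'.nonJoints := by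
    intro x hx
    obtain ⟨v, hv, rfl⟩ := Finset.mem_image.mp hx
    exact hnj v hv
  have hAcard : (T.nonJoints.image g.f).card = T.N :=
    Finset.card_image_of_injective _ hinj
  have hD : (T'.nonJoints \ T.nonJoints.image g.f).card = 1 := by
    rw [Finset.card_sdiff_of_subset hAsub, hAcard]
    have hc : T'.nonJoints.card = T.N + 1 := hg.2
    omega
  obtain ⟨u, hu⟩ := Finset.card_eq_one.mp hD
  have humem : u ∈ T'.nonJoints \ T.nonJoints.image g.f := hu ▸ Finset.mem_singleton_self u
  have huB : u ∈ T'.nonJoints := (Finset.mem_sdiff.mp humem).1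
  have huA : u ∉ T.nonJoints.image g.f := (Finset.mem_sdiff.mp humem).2
  have hmem_diff : ∀ x ∈ T'.nonJoints, x ∉ T.nonJoints.image g.f → x = u := by
    intro x h1 h2
    exact Finset.mem_singleton.mp (hu ▸ Finset.mem_sdiff.mpr ⟨h1, h2⟩)
  have hJu : ∀ w ∈ T.J, g.f w ∉ T'.J → g.f w = u := by
    intro w hw h'
    refine hmem_diff _ (by simp [Necklace.nonJoints, h']) ?_
    intro hmem
    obtain ⟨v, hv, hgv⟩ := Finset.mem_image.mp hmem
    have hvw : v = w := hinj hgv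
    subst hvw
    simp only [Necklace.nonJoints, Finset.mem_sdiff, Finset.mem_univ, true_and] at hv
    exact hv hw
  obtain ⟨j0, hj0⟩ : ∃ j0 : Fin T'.N, T'.enum j0 = ⟨u, huB⟩ :=
    ⟨T'.enum.symm ⟨u, huB⟩, T'.enum.apply_symm_apply _⟩
  have hj0c : ((T'.enum j0 : Fin (T'.m + 1))) = u := congrArg Subtype.val hj0
  -- the key identification of the two enumerations
  have key : ∀ i : Fin T.N,
      ((T'.enum (Fin.cast hg.2.symm ((Fin.cast hg.2 j0).succAbove i)) : Fin (T'.m + 1)))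
        = g.f (T.enum i) := by
    have hF : StrictMono (fun i : Fin T.N =>
        ((T'.enum (Fin.cast hg.2.symm ((Fin.cast hg.2 j0).succAbove i)) : Fin (T'.m + 1)))) := by
      intro a b hab
      have h1 : (Fin.cast hg.2 j0).succAbove a < (Fin.cast hg.2 j0).succAbove b :=
        Fin.strictMono_succAbove _ hab
      have h2 : Fin.cast hg.2.symm ((Fin.cast hg.2 j0).succAbove a)
          < Fin.cast hg.2.symm ((Fin.cast hg.2 j0).succAbove b) := by
        simp only [Fin.lt_def, Fin.coe_cast]
        exact Fin.lt_def.mp h1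
      exact Subtype.coe_lt_coe.mpr (T'.enum.strictMono h2)
    have hG : StrictMono (fun i : Fin T.N => g.f (T.enum i)) := by
      intro a b hab
      exact hsm (Subtype.coe_lt_coe.mpr (T.enum.strictMono hab))
    have hrange : Set.range (fun i : Fin T.N =>
        ((T'.enum (Fin.cast hg.2.symm ((Fin.cast hg.2 j0).succAbove i)) : Fin (T'.m + 1))))
        = Set.range (fun i : Fin T.N => g.f (T.enum i)) := by
      have hr2 : Set.range (fun i : Fin T.N => g.f (T.enum i))
          = ↑(T.nonJoints.image g.f) := by
        ext x
        simp only [Set.mem_range, Finset.coe_image, Set.mem_image, Finset.mem_coe]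
        constructor
        · rintro ⟨i, rfl⟩
          exact ⟨T.enum i, (T.enum i).2, rfl⟩
        · rintro ⟨v, hv, rfl⟩
          exact ⟨T.enum.symm ⟨v, hv⟩, by simp⟩
      rw [hr2]
      ext x
      simp only [Set.mem_range, Finset.mem_coe]
      constructor
      · rintro ⟨i, rfl⟩
        have hxB := (T'.enum (Fin.cast hg.2.symm ((Fin.cast hg.2 j0).succAbove i))).2
        have hxne : ((T'.enum (Fin.cast hg.2.symm ((Fin.cast hg.2 j0).succAbove i))
            : Fin (T'.m + 1))) ≠ u := by
          intro hxu
          have heq : T'.enum (Fin.cast hg.2.symm ((Fin.cast hg.2 j0).succAbove i))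
              = T'.enum j0 := by
            rw [hj0]; exact Subtype.ext hxu
          have hkj : Fin.cast hg.2.symm ((Fin.cast hg.2 j0).succAbove i) = j0 :=
            T'.enum.injective heq
          have : (Fin.cast hg.2 j0).succAbove i = Fin.cast hg.2 j0 := by
            apply Fin.ext
            have hvv := congrArg Fin.val hkj
            simp only [Fin.coe_cast] at hvv ⊢
            exact hvv
          exact Fin.succAbove_ne _ i this
        by_contra hnmem
        exact hxne (hmem_diff _ hxB hnmem)
      · intro hx
        have hxB : x ∈ T'.nonJoints := hAsub hx
        have hxne : x ≠ u := fun h => huA (h ▸ hx)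
        obtain ⟨k0, hk0⟩ : ∃ k0 : Fin T'.N, T'.enum k0 = ⟨x, hxB⟩ :=
          ⟨T'.enum.symm ⟨x, hxB⟩, T'.enum.apply_symm_apply _⟩
        have hne : Fin.cast hg.2 k0 ≠ Fin.cast hg.2 j0 := by
          intro h
          have : k0 = j0 := by
            apply Fin.ext
            have hvv := congrArg Fin.val h
            simp only [Fin.coe_cast] at hvv
            exact hvv
          rw [this, hj0] at hk0
          exact hxne (congrArg Subtype.val hk0.symm)
        obtain ⟨i, hi⟩ := Fin.exists_succAbove_eq hne
        refine ⟨i, ?_⟩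
        have hcc : Fin.cast hg.2.symm ((Fin.cast hg.2 j0).succAbove i) = k0 := by
          apply Fin.ext
          have hvv := congrArg Fin.val hi
          simp only [Fin.coe_cast] at hvv ⊢
          exact hvv
        rw [hcc, hk0]
    haveI : WellFoundedLT (Fin T.N) := Finite.to_wellFoundedLT
    have := (hF.range_inj hG).mp hrange
    exact fun i => congrFun this i
  refine ⟨Fin.cast hg.2 j0, decide (u ∈ Finset.image g.f T.J), ?_, ?_, ?_⟩
  · intro s i
    by_cases hij : Fin.cast hg.2 i = Fin.cast hg.2 j0
    · have hieq : i = j0 := by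
        apply Fin.ext
        have hvv := congrArg Fin.val hij
        simp only [Fin.coe_cast] at hvv
        exact hvv
      subst hieq
      rw [hij, Fin.insertNth_apply_same]
      simp only [Necklace.P1, hj0c]
      apply decide_eq_decide.mpr
      constructor
      · intro h
        obtain ⟨v, hv, hgv⟩ := Finset.mem_image.mp h
        simp only [Necklace.subsetOf, Finset.mem_union, Finset.mem_image,
          Finset.mem_filter, Finset.mem_univ, true_and] at hv
        rcases hv with hv | ⟨k, _, hk⟩
        · exact Finset.mem_image.mpr ⟨v, hv, hgv⟩
        · exfalso
          apply huA
          refine Finset.mem_image.mpr ⟨v, ?_, hgv⟩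
          rw [← hk]
          exact (T.enum k).2
      · intro h
        obtain ⟨w, hw, hgw⟩ := Finset.mem_image.mp h
        exact Finset.mem_image.mpr ⟨w, Finset.mem_union_left _ hw, hgw⟩
    · obtain ⟨i₀, hi₀⟩ := Fin.exists_succAbove_eq hij
      rw [← hi₀, Fin.insertNth_apply_succAbove]
      have hieq : i = Fin.cast hg.2.symm ((Fin.cast hg.2 j0).succAbove i₀) := by
        apply Fin.ext
        have hvv := congrArg Fin.val hi₀
        simp only [Fin.coe_cast] at hvv ⊢
        exact hvv.symm
      simp only [Necklace.P1]
      rw [hieq, key i₀]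
      have hiff : (g.f (T.enum i₀) ∈ (T.subsetOf s).image g.f) ↔ s i₀ = true := by
        constructor
        · intro h
          obtain ⟨v, hv, hgv⟩ := Finset.mem_image.mp h
          have hveq : v = T.enum i₀ := hinj hgv
          subst hveq
          simp only [Necklace.subsetOf, Finset.mem_union, Finset.mem_image,
            Finset.mem_filter, Finset.mem_univ, true_and] at hv
          rcases hv with hv | ⟨k, hsk, hk⟩
          · exfalso
            have := (T.enum i₀).2
            simp only [Necklace.nonJoints, Finset.mem_sdiff, Finset.mem_univ, true_and] at this
            exact this hv
          · have hki : k = i₀ := T.enum.injective (Subtype.ext hk)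
            rw [← hki]
            exact hsk
        · intro h
          refine Finset.mem_image.mpr ⟨T.enum i₀, ?_, rfl⟩
          simp only [Necklace.subsetOf, Finset.mem_union]
          right
          exact Finset.mem_image.mpr ⟨i₀, by simp [h], rfl⟩
      simp [hiff]
  · intro hss
    obtain ⟨x, hx1, hx2⟩ := Finset.exists_of_ssubset hss
    obtain ⟨w, hw, rfl⟩ := Finset.mem_image.mp hx1
    have hwu : g.f w = u := hJu w hw hx2
    have : u ∈ Finset.image g.f T.J := hwu ▸ Finset.mem_image.mpr ⟨w, hw, rfl⟩
    simp [this]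
  · intro heq
    have hnm : u ∉ Finset.image g.f T.J := by
      rw [← heq]
      intro h
      have : u ∉ T'.J := by
        simpa only [Necklace.nonJoints, Finset.mem_sdiff, Finset.mem_univ, true_and] using huB
      exact this h
    simp [hnm]
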